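/- Let X and Y be finite-dimensional Banach lattices. For every ε > 0 there exists δ > 0 such that whenever S : X → Y is a positive bounded linear operator with ‖S‖ = 1, there is a positive bounded linear operator T : X → Y with ‖T‖ = 1 such that (i) ‖T − S‖ < ε, and (ii) for every x₀ ∈ X with ‖x₀‖ = 1 and ‖S(x₀)‖ > 1 − δ, there exists u₀ ∈ X with ‖u₀‖ = 1, ‖T(u₀)‖ = 1 and ‖u₀ − x₀‖ < ε. -/

import Mathlib

open Metric

lemma lemA {X Y : Type*} [NormedAddCommGroup X] [NormedSpace ℝ X]
    [NormedAddCommGroup Y] [NormedSpace ℝ Y] [FiniteDimensional ℝ X]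
    (S : X →L[ℝ] Y) (hS : ‖S‖ = 1) (ε : ℝ) (hε : 0 < ε) :
    ∃ δ : ℝ, 0 < δ ∧ ∀ x : X, ‖x‖ = 1 → 1 - δ < ‖S x‖ →
      ∃ u : X, ‖u‖ = 1 ∧ ‖S u‖ = 1 ∧ ‖u - x‖ < ε := by
  set C : Set X := ⋂ u : {u : X // ‖u‖ = 1 ∧ ‖S u‖ = 1}, {x : X | ε ≤ ‖(u : X) - x‖} with hC
  have hCclosed : IsClosed C :=
    isClosed_iInter fun u => isClosed_le continuous_const (by fun_prop)
  set A : Set X := sphere (0 : X) 1 ∩ C with hAdef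
  have hAcomp : IsCompact A := (isCompact_sphere 0 1).inter_right hCclosed
  -- extraction: a unit vector not in A yields a close norm-attaining point
  have hext : ∀ x : X, ‖x‖ = 1 → x ∉ A →
      ∃ u : X, ‖u‖ = 1 ∧ ‖S u‖ = 1 ∧ ‖u - x‖ < ε := by
    intro x hx hxA
    have hxs : x ∈ sphere (0 : X) 1 := by simpa [mem_sphere_zero_iff_norm] using hx
    have hxC : x ∉ C := fun h => hxA ⟨hxs, h⟩
    rw [hC, Set.mem_iInter] at hxC
    push_neg at hxC
    obtain ⟨u, hu⟩ := hxC
    exact ⟨(u : X), u.2.1, u.2.2, by simpa using hu⟩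
  rcases A.eq_empty_or_nonempty with hA | hA
  · exact ⟨1, one_pos, fun x hx _ => hext x hx (by simp [hA])⟩
  · obtain ⟨xm, hxmA, hmax⟩ := hAcomp.exists_isMaxOn hA
      ((continuous_norm.comp S.continuous).continuousOn)
    have hxm1 : ‖xm‖ = 1 := by
      have := hxmA.1; simpa [mem_sphere_zero_iff_norm] using this
    have hlt : ‖S xm‖ < 1 := by
      rcases lt_or_eq_of_le (by simpa [hS, hxm1] using S.le_opNorm xm) with h | h
      · exact h
      · exfalso
        have := Set.mem_iInter.1 hxmA.2 ⟨xm, hxm1, h⟩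
        simp only [Set.mem_setOf_eq, sub_self, norm_zero] at this
        linarith
    refine ⟨1 - ‖S xm‖, by linarith, fun x hx hgt => hext x hx fun hxA => ?_⟩
    have := hmax hxA
    simp only [Function.comp] at this
    have : ‖S x‖ ≤ ‖S xm‖ := this
    linarith

/-- Finite-dimensional version of the Bishop–Phelps–Bollobás property for
positive operators between finite-dimensional Banach lattices, where the operator `T` can be
chosen uniformly for all points `x₀` at which `S` almost attains its norm. -/
theorem stmt4 (X Y : Type*)
    [NormedAddCommGroup X] [Lattice X] [IsOrderedAddMonoid X] [HasSolidNorm X]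
    [NormedSpace ℝ X] [PosSMulStrictMono ℝ X] [PosSMulReflectLT ℝ X]
    [NormedAddCommGroup Y] [Lattice Y] [IsOrderedAddMonoid Y] [HasSolidNorm Y]
    [NormedSpace ℝ Y] [PosSMulStrictMono ℝ Y] [PosSMulReflectLT ℝ Y]
    [FiniteDimensional ℝ X] [FiniteDimensional ℝ Y]
    (ε : ℝ) (hε : 0 < ε) :
    ∃ δ : ℝ, 0 < δ ∧
      ∀ S : X →L[ℝ] Y, (∀ x : X, 0 ≤ x → 0 ≤ S x) → ‖S‖ = 1 →
        ∃ T : X →L[ℝ] Y, (∀ x : X, 0 ≤ x → 0 ≤ T x) ∧ ‖T‖ = 1 ∧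
          ‖T - S‖ < ε ∧
          ∀ x₀ : X, ‖x₀‖ = 1 → 1 - δ < ‖S x₀‖ →
            ∃ u₀ : X, ‖u₀‖ = 1 ∧ ‖T u₀‖ = 1 ∧ ‖u₀ - x₀‖ < ε := by
  classical
  set K : Set (X →L[ℝ] Y) := {S | (∀ x : X, 0 ≤ x → 0 ≤ S x) ∧ ‖S‖ = 1} with hKdef
  have hKclosed : IsClosed K := by
    have h1 : IsClosed {S : X →L[ℝ] Y | ∀ x : X, 0 ≤ x → 0 ≤ S x} := by
      have : {S : X →L[ℝ] Y | ∀ x : X, 0 ≤ x → 0 ≤ S x}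
          = ⋂ (x : X) (_ : 0 ≤ x), {S : X →L[ℝ] Y | 0 ≤ S x} := by
        ext S; simp
      rw [this]
      exact isClosed_iInter fun x => isClosed_iInter fun _ =>
        isClosed_le continuous_const (continuous_id.clm_apply continuous_const)
    have h2 : IsClosed {S : X →L[ℝ] Y | ‖S‖ = 1} :=
      isClosed_eq continuous_norm continuous_const
    exact h1.inter h2
  have hKcomp : IsCompact K := by
    refine (isCompact_closedBall (0 : X →L[ℝ] Y) 1).of_isClosed_subset hKclosed ?_
    intro S hS
    simp [mem_closedBall_zero_iff, hS.2]
  -- choice of δ for each operator in K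
  have hch : ∀ i : ↥K, ∃ δ : ℝ, 0 < δ ∧ ∀ x : X, ‖x‖ = 1 → 1 - δ < ‖(i : X →L[ℝ] Y) x‖ →
      ∃ u : X, ‖u‖ = 1 ∧ ‖(i : X →L[ℝ] Y) u‖ = 1 ∧ ‖u - x‖ < ε :=
    fun i => lemA (i : X →L[ℝ] Y) i.2.2 ε hε
  choose d hdpos hd using hch
  set r : ↥K → ℝ := fun i => min ε (d i / 2) with hr
  have hrpos : ∀ i, 0 < r i := fun i => lt_min hε (by linarith [hdpos i])
  have hcov : K ⊆ ⋃ i : ↥K, ball (i : X →L[ℝ] Y) (r i) := fun S hS =>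
    Set.mem_iUnion.2 ⟨⟨S, hS⟩, mem_ball_self (hrpos ⟨S, hS⟩)⟩
  obtain ⟨t, ht⟩ := hKcomp.elim_finite_subcover _ (fun i => isOpen_ball) hcov
  rcases t.eq_empty_or_nonempty with hte | htne
  · refine ⟨1, one_pos, fun S hpos hnorm => absurd (ht ⟨hpos, hnorm⟩) ?_⟩
    simp [hte]
  · set δ : ℝ := t.inf' htne (fun i => d i / 2) with hδ
    have hδpos : 0 < δ := by
      rw [hδ, Finset.lt_inf'_iff]
      exact fun i _ => by linarith [hdpos i]
    refine ⟨δ, hδpos, fun S hpos hnorm => ?_⟩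
    have hSK : S ∈ K := ⟨hpos, hnorm⟩
    obtain ⟨i, hit, hball⟩ := Set.mem_iUnion₂.1 (ht hSK)
    have hdist : ‖(i : X →L[ℝ] Y) - S‖ < r i := by
      have : dist S (i : X →L[ℝ] Y) < r i := mem_ball.1 hball
      rw [dist_eq_norm] at this
      rw [← norm_neg]
      simpa [neg_sub] using this
    refine ⟨(i : X →L[ℝ] Y), i.2.1, i.2.2, lt_of_lt_of_le hdist (min_le_left _ _), ?_⟩
    intro x₀ hx₀ hgt
    have hδle : δ ≤ d i / 2 := Finset.inf'_le _ hit
    have hkey : 1 - d i < ‖(i : X →L[ℝ] Y) x₀‖ := by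
      have h1 : ‖S x₀ - (i : X →L[ℝ] Y) x₀‖ ≤ ‖S - (i : X →L[ℝ] Y)‖ * ‖x₀‖ :=
        (S - (i : X →L[ℝ] Y)).le_opNorm x₀
      have h2 : ‖S - (i : X →L[ℝ] Y)‖ < d i / 2 := by
        rw [← norm_neg]
        calc ‖-(S - (i : X →L[ℝ] Y))‖ = ‖(i : X →L[ℝ] Y) - S‖ := by rw [neg_sub]
        _ < r i := hdist
        _ ≤ d i / 2 := min_le_right _ _
      have h3 : ‖S x₀‖ - ‖(i : X →L[ℝ] Y) x₀‖ ≤ ‖S x₀ - (i : X →L[ℝ] Y) x₀‖ :=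
        norm_sub_norm_le _ _
      rw [hx₀, mul_one] at h1
      linarith
    obtain ⟨u₀, hu₀, hTu₀, hclose⟩ := hd i x₀ hx₀ hkey
    exact ⟨u₀, hu₀, hTu₀, hclose⟩
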